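/- arXiv:2406.16874 — 4 statements merged into one kernel-verified Lean document; each statement's English description precedes it below -/
import Mathlib

section
/- Consider the QP setting, and assume that for all x ∈ B, L_g h(x) ≠ 0. Fix x ∈ ℝ^n and define λ(x) = −ω(x)/d(x) if x ∈ Ω and λ(x) = 0 otherwise, u(x) = −Q(x)^{-1}(c(x) − L_g h(x)^T λ(x)), and μ(x) = h(x) λ(x)/γ. Then the pair (u(x), μ(x)) is the unique global minimizer over (ũ, μ̃) ∈ ℝ^m × ℝ of the cost (1/2) ũ^T Q(x) ũ + c(x)^T ũ + (γ/2) μ̃^2 subject to the constraint L_f h(x) + L_g h(x) ũ + α(h(x)) + μ̃ h(x) ≥ 0. -/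
open Matrix


/-- Lie derivative of `h` along the vector field `f`: `L_f h(x) = h′(x) f(x)`. -/
noncomputable def LieF {n : ℕ} (h : (Fin n → ℝ) → ℝ) (f : (Fin n → ℝ) → Fin n → ℝ)
    (x : Fin n → ℝ) : ℝ :=
  fderiv ℝ h x (f x)

/-- Lie derivative of `h` along the columns of `g`: `L_g h(x) = h′(x) g(x)`. -/
noncomputable def LieG {n m : ℕ} (h : (Fin n → ℝ) → ℝ)
    (g : (Fin n → ℝ) → Fin n → Fin m → ℝ) (x : Fin n → ℝ) : Fin m → ℝ :=
  fun i => fderiv ℝ h x (fun k => g x k i)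


private lemma qp_scalar_aux (s cu q t e la hx mu δ γ : ℝ) (hγ : 0 < γ)
    (hlin : 0 ≤ la * (t + hx * δ)) (hμγ : γ * mu = hx * la)
    (hpos : 0 < q + γ * δ ^ 2) :
    1 / 2 * s + cu + γ / 2 * mu ^ 2
      < 1 / 2 * (s + 2 * (la * t - e) + q) + (cu + e) + γ / 2 * (mu + δ) ^ 2 := by
  have h3 : γ * mu * δ = hx * la * δ := by rw [hμγ]
  nlinarith [hlin, hpos, h3]

/-- Theorem 1(a): the closed-form pair `(u(x), μ(x))` is the unique global minimizer
of the quadratic cost `½ũᵀQ(x)ũ + c(x)ᵀũ + (γ/2)μ̃²` subject to the relaxed CBF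
constraint. -/
theorem closed_form_unique_minimizer {n m : ℕ}
    (h : (Fin n → ℝ) → ℝ) (hh : ContDiff ℝ 1 h)
    (f : (Fin n → ℝ) → Fin n → ℝ) (hf : Continuous f)
    (g : (Fin n → ℝ) → Fin n → Fin m → ℝ) (hg : Continuous g)
    (Q : (Fin n → ℝ) → Matrix (Fin m) (Fin m) ℝ) (hQ : ∀ x, (Q x).PosDef)
    (hQc : ∀ i j, Continuous fun x => Q x i j)
    (c : (Fin n → ℝ) → Fin m → ℝ) (hc : Continuous c)
    (γ : ℝ) (hγ : 0 < γ)
    (α : ℝ → ℝ) (hα0 : α 0 = 0) (hαmono : Monotone α)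
    (hB : ∀ x, h x = 0 → LieF h f x ≤ 0 → LieG h g x ≠ 0)
    (ω : (Fin n → ℝ) → ℝ)
    (hω : ∀ x, ω x = LieF h f x
      - (∑ i, LieG h g x i * Matrix.mulVec (Q x)⁻¹ (c x) i) + α (h x))
    (d : (Fin n → ℝ) → ℝ)
    (hd : ∀ x, d x = (∑ i, LieG h g x i * Matrix.mulVec (Q x)⁻¹ (LieG h g x) i)
      + γ⁻¹ * (h x) ^ 2)
    (lam : (Fin n → ℝ) → ℝ)
    (hlam : ∀ x, lam x = if ω x < 0 then -ω x / d x else 0)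
    (u : (Fin n → ℝ) → Fin m → ℝ)
    (hu : ∀ x, u x = -(Matrix.mulVec (Q x)⁻¹ (fun i => c x i - LieG h g x i * lam x)))
    (μ : (Fin n → ℝ) → ℝ) (hμ : ∀ x, μ x = h x * lam x / γ)
    (x : Fin n → ℝ) :
    (0 ≤ LieF h f x + (∑ i, LieG h g x i * u x i) + α (h x) + μ x * h x) ∧
    ∀ (utilde : Fin m → ℝ) (μtilde : ℝ),
      0 ≤ LieF h f x + (∑ i, LieG h g x i * utilde i) + α (h x) + μtilde * h x →
      (utilde, μtilde) ≠ (u x, μ x) →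
      (1 / 2) * (∑ i, u x i * Matrix.mulVec (Q x) (u x) i) + (∑ i, c x i * u x i)
          + (γ / 2) * (μ x) ^ 2
        < (1 / 2) * (∑ i, utilde i * Matrix.mulVec (Q x) utilde i)
          + (∑ i, c x i * utilde i) + (γ / 2) * μtilde ^ 2 := by
  classical
  have hpd := hQ x
  have hdet : IsUnit (Q x).det := isUnit_iff_ne_zero.mpr hpd.det_pos.ne'
  have hQQi : Q x * (Q x)⁻¹ = 1 := Matrix.mul_nonsing_inv _ hdet
  have hsymQ : (Q x)ᵀ = Q x := by
    rw [← Matrix.conjTranspose_eq_transpose_of_trivial]; exact hpd.1.eq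
  have hsumrw : ∀ v w : Fin m → ℝ, (∑ i, v i * w i) = v ⬝ᵥ w := fun _ _ => rfl
  have hAnn : 0 ≤ LieG h g x ⬝ᵥ (Q x)⁻¹ *ᵥ LieG h g x := by
    simpa using hpd.inv.posSemidef.dotProduct_mulVec_nonneg (LieG h g x)
  have hωeq : ω x = LieF h f x - LieG h g x ⬝ᵥ (Q x)⁻¹ *ᵥ c x + α (h x) := by
    rw [hω x]; rfl
  have hdeq : d x = LieG h g x ⬝ᵥ (Q x)⁻¹ *ᵥ LieG h g x + γ⁻¹ * (h x) ^ 2 := by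
    rw [hd x]; rfl
  have hdpos : ω x < 0 → 0 < d x := by
    intro hneg
    rcases eq_or_ne (h x) 0 with h0 | h0
    · have hane : LieG h g x ≠ 0 := by
        by_cases hLf : LieF h f x ≤ 0
        · exact hB x h0 hLf
        · intro ha0
          rw [hωeq, h0, hα0, ha0] at hneg
          simp only [zero_dotProduct] at hneg
          linarith
      have hApos : 0 < LieG h g x ⬝ᵥ (Q x)⁻¹ *ᵥ LieG h g x := by
        simpa using hpd.inv.dotProduct_mulVec_pos hane
      rw [hdeq, h0]
      nlinarith
    · have h1 : 0 < γ⁻¹ * (h x) ^ 2 := by positivity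
      rw [hdeq]; linarith
  have hla : 0 ≤ lam x := by
    rw [hlam x]; split_ifs with hc1
    · have hd' := hdpos hc1
      have : 0 ≤ -ω x := by linarith
      positivity
    · exact le_refl 0
  have hGu0 : 0 ≤ ω x + lam x * d x := by
    rw [hlam x]; split_ifs with hc1
    · have hd' := hdpos hc1
      have hcanc : -ω x / d x * d x = -ω x := div_mul_cancel₀ _ hd'.ne'
      linarith
    · push_neg at hc1; linarith
  have hcs : lam x * (ω x + lam x * d x) = 0 := by
    rw [hlam x]; split_ifs with hc1
    · have hd' := hdpos hc1
      have hcanc : -ω x / d x * d x = -ω x := div_mul_cancel₀ _ hd'.ne'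
      rw [hcanc]; ring
    · ring
  have hv : (fun i => c x i - LieG h g x i * lam x) = c x - lam x • LieG h g x := by
    funext i
    simp only [Pi.sub_apply, Pi.smul_apply, smul_eq_mul]
    ring
  have hQu : Q x *ᵥ u x = lam x • LieG h g x - c x := by
    rw [hu x, hv, Matrix.mulVec_neg, Matrix.mulVec_mulVec, hQQi, Matrix.one_mulVec, neg_sub]
  have hadotu : LieG h g x ⬝ᵥ u x
      = -(LieG h g x ⬝ᵥ (Q x)⁻¹ *ᵥ c x)
        + lam x * (LieG h g x ⬝ᵥ (Q x)⁻¹ *ᵥ LieG h g x) := by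
    rw [hu x, hv, dotProduct_neg, Matrix.mulVec_sub, Matrix.mulVec_smul,
      dotProduct_sub, dotProduct_smul, smul_eq_mul]
    ring
  have hGu : LieF h f x + LieG h g x ⬝ᵥ u x + α (h x) + μ x * h x
      = ω x + lam x * d x := by
    rw [hadotu, hμ x, hωeq, hdeq]
    field_simp
    ring
  constructor
  · rw [hsumrw, hGu]; exact hGu0
  · intro ut μt hfeas hne
    obtain ⟨Δ, rfl⟩ : ∃ Δ, ut = u x + Δ := ⟨ut - u x, by abel⟩
    obtain ⟨δ, rfl⟩ : ∃ δ, μt = μ x + δ := ⟨μt - μ x, by ring⟩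
    have hΔδ : Δ ≠ 0 ∨ δ ≠ 0 := by
      by_contra hcon
      push_neg at hcon
      obtain ⟨h1, h2⟩ := hcon
      exact hne (by rw [h1, h2]; simp)
    have hsymdot : ∀ v w : Fin m → ℝ, v ⬝ᵥ Q x *ᵥ w = w ⬝ᵥ Q x *ᵥ v := by
      intro v w
      rw [Matrix.dotProduct_mulVec, ← Matrix.mulVec_transpose, hsymQ, dotProduct_comm]
    have hfeas' : 0 ≤ (ω x + lam x * d x) + (LieG h g x ⬝ᵥ Δ + h x * δ) := by
      have h1 : (∑ i, LieG h g x i * (u x + Δ) i)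
          = LieG h g x ⬝ᵥ u x + LieG h g x ⬝ᵥ Δ := by
        rw [hsumrw]; exact dotProduct_add _ _ _
      rw [h1] at hfeas
      have hexp : LieF h f x + (LieG h g x ⬝ᵥ u x + LieG h g x ⬝ᵥ Δ) + α (h x)
          + (μ x + δ) * h x
          = (ω x + lam x * d x) + (LieG h g x ⬝ᵥ Δ + h x * δ) := by
        rw [← hGu]; ring
      rw [hexp] at hfeas
      exact hfeas
    have hlin : 0 ≤ lam x * (LieG h g x ⬝ᵥ Δ + h x * δ) := by
      have h2 : 0 ≤ lam x * ((ω x + lam x * d x) + (LieG h g x ⬝ᵥ Δ + h x * δ)) :=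
        mul_nonneg hla hfeas'
      nlinarith [hcs]
    have hμγ : γ * μ x = h x * lam x := by
      rw [hμ x]; field_simp
    have hμγδ : γ * μ x * δ = h x * lam x * δ := by rw [hμγ]
    have e1 : (u x + Δ) ⬝ᵥ Q x *ᵥ (u x + Δ)
        = u x ⬝ᵥ Q x *ᵥ u x + 2 * (Δ ⬝ᵥ Q x *ᵥ u x) + Δ ⬝ᵥ Q x *ᵥ Δ := by
      simp only [Matrix.mulVec_add, dotProduct_add, add_dotProduct]
      rw [hsymdot (u x) Δ]
      ring
    have e2 : Δ ⬝ᵥ Q x *ᵥ u x = lam x * (LieG h g x ⬝ᵥ Δ) - Δ ⬝ᵥ c x := by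
      rw [hQu, dotProduct_sub, dotProduct_smul,
        dotProduct_comm Δ (LieG h g x), smul_eq_mul]
    have e3 : c x ⬝ᵥ (u x + Δ) = c x ⬝ᵥ u x + Δ ⬝ᵥ c x := by
      rw [dotProduct_add, dotProduct_comm (c x) Δ]
    have hqnn : 0 ≤ Δ ⬝ᵥ Q x *ᵥ Δ := by simpa using hpd.posSemidef.dotProduct_mulVec_nonneg Δ
    have hpos : 0 < Δ ⬝ᵥ Q x *ᵥ Δ + γ * δ ^ 2 := by
      rcases hΔδ with hΔ | hδ
      · have hq : 0 < Δ ⬝ᵥ Q x *ᵥ Δ := by simpa using hpd.dotProduct_mulVec_pos hΔ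
        have := mul_nonneg hγ.le (sq_nonneg δ)
        linarith
      · have hδ2 : 0 < δ ^ 2 := lt_of_le_of_ne (sq_nonneg δ) (Ne.symm (pow_ne_zero 2 hδ))
        have := mul_pos hγ hδ2
        linarith
    rw [hsumrw, hsumrw, hsumrw, hsumrw, e1, e2, e3]
    exact qp_scalar_aux _ _ _ _ _ _ _ _ _ _ hγ hlin hμγ hpos
end

section
/- Consider the QP setting with α continuous, and assume that for all x ∈ B, L_g h(x) ≠ 0. Define λ(x) = −ω(x)/d(x) if x ∈ Ω and λ(x) = 0 otherwise, u(x) = −Q(x)^{-1}(c(x) − L_g h(x)^T λ(x)), and μ(x) = h(x) λ(x)/γ. Then λ, u, and μ are continuous on ℝ^n. -/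
/-- Theorem 1(c): `λ`, `u`, and `μ` are continuous on `ℝⁿ`. -/
theorem closed_form_continuous {n m : ℕ}
    (h : (Fin n → ℝ) → ℝ) (hh : ContDiff ℝ 1 h)
    (f : (Fin n → ℝ) → Fin n → ℝ) (hf : Continuous f)
    (g : (Fin n → ℝ) → Fin n → Fin m → ℝ) (hg : Continuous g)
    (Q : (Fin n → ℝ) → Matrix (Fin m) (Fin m) ℝ) (hQ : ∀ x, (Q x).PosDef)
    (hQc : ∀ i j, Continuous fun x => Q x i j)
    (c : (Fin n → ℝ) → Fin m → ℝ) (hc : Continuous c)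
    (γ : ℝ) (hγ : 0 < γ)
    (α : ℝ → ℝ) (hα0 : α 0 = 0) (hαmono : Monotone α) (hαcont : Continuous α)
    (hB : ∀ x, h x = 0 → LieF h f x ≤ 0 → LieG h g x ≠ 0)
    (ω : (Fin n → ℝ) → ℝ)
    (hω : ∀ x, ω x = LieF h f x
      - (∑ i, LieG h g x i * Matrix.mulVec (Q x)⁻¹ (c x) i) + α (h x))
    (d : (Fin n → ℝ) → ℝ)
    (hd : ∀ x, d x = (∑ i, LieG h g x i * Matrix.mulVec (Q x)⁻¹ (LieG h g x) i)
      + γ⁻¹ * (h x) ^ 2)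
    (lam : (Fin n → ℝ) → ℝ)
    (hlam : ∀ x, lam x = if ω x < 0 then -ω x / d x else 0)
    (u : (Fin n → ℝ) → Fin m → ℝ)
    (hu : ∀ x, u x = -(Matrix.mulVec (Q x)⁻¹ (fun i => c x i - LieG h g x i * lam x)))
    (μ : (Fin n → ℝ) → ℝ) (hμ : ∀ x, μ x = h x * lam x / γ) :
    Continuous lam ∧ Continuous u ∧ Continuous μ := by
  classical
  -- continuity of the Lie derivatives
  have hfd : Continuous (fun x => fderiv ℝ h x) := hh.continuous_fderiv one_ne_zero
  have hLF : Continuous (LieF h f) := hfd.clm_apply hf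
  have hLG : ∀ i, Continuous (fun x => LieG h g x i) := fun i =>
    hfd.clm_apply (continuous_pi fun k =>
      (continuous_apply i).comp ((continuous_apply k).comp hg))
  -- continuity of the entries of (Q x)⁻¹
  have hQcont : Continuous Q := continuous_pi fun i => continuous_pi fun j => hQc i j
  have hdet : Continuous fun x => (Q x).det := hQcont.matrix_det
  have hdetne : ∀ x, (Q x).det ≠ 0 := fun x => (hQ x).det_pos.ne'
  have hinv : ∀ i j, Continuous fun x => (Q x)⁻¹ i j := by
    intro i j
    have heq : (fun x => (Q x)⁻¹ i j) = fun x => ((Q x).det)⁻¹ * (Q x).adjugate i j := by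
      funext x
      rw [Matrix.inv_def, Ring.inverse_eq_inv']
      simp [Matrix.smul_apply, smul_eq_mul]
    rw [heq]
    exact (hdet.inv₀ hdetne).mul
      ((continuous_apply j).comp ((continuous_apply i).comp hQcont.matrix_adjugate))
  -- continuity of mulVec entries
  have hmul : ∀ (v : (Fin n → ℝ) → Fin m → ℝ), Continuous v → ∀ i,
      Continuous fun x => Matrix.mulVec (Q x)⁻¹ (v x) i := by
    intro v hv i
    simp only [Matrix.mulVec, dotProduct]
    exact continuous_finset_sum _ fun j _ => (hinv i j).mul ((continuous_apply j).comp hv)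
  have hLGpi : Continuous (fun x => LieG h g x) := continuous_pi hLG
  -- continuity of ω and d
  have hωc : Continuous ω := by
    have : ω = fun x => LieF h f x
        - (∑ i, LieG h g x i * Matrix.mulVec (Q x)⁻¹ (c x) i) + α (h x) := funext hω
    rw [this]
    exact (hLF.sub (continuous_finset_sum _ fun i _ =>
      (hLG i).mul (hmul c hc i))).add (hαcont.comp hh.continuous)
  have hdc : Continuous d := by
    have : d = fun x => (∑ i, LieG h g x i * Matrix.mulVec (Q x)⁻¹ (LieG h g x) i)
        + γ⁻¹ * (h x) ^ 2 := funext hd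
    rw [this]
    exact (continuous_finset_sum _ fun i _ => (hLG i).mul (hmul _ hLGpi i)).add
      (continuous_const.mul (hh.continuous.pow 2))
  -- d x = 0 → 0 < ω x
  have hkey : ∀ x, d x = 0 → 0 < ω x := by
    intro x hx0
    set v : Fin m → ℝ := LieG h g x with hv
    have hpsd := (hQ x).inv.posSemidef
    have hnn1 : 0 ≤ ∑ i, v i * Matrix.mulVec (Q x)⁻¹ v i := by
      have := hpsd.dotProduct_mulVec_nonneg v
      simpa [dotProduct] using this
    have hnn2 : 0 ≤ γ⁻¹ * (h x) ^ 2 :=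
      mul_nonneg (inv_nonneg.mpr hγ.le) (sq_nonneg _)
    have hsum : (∑ i, v i * Matrix.mulVec (Q x)⁻¹ v i) + γ⁻¹ * (h x) ^ 2 = 0 := by
      rw [← hd x]; exact hx0
    have ht1 : (∑ i, v i * Matrix.mulVec (Q x)⁻¹ v i) = 0 := le_antisymm (by linarith) hnn1
    have ht2 : γ⁻¹ * (h x) ^ 2 = 0 := le_antisymm (by linarith) hnn2
    have hx : h x = 0 := by
      rcases mul_eq_zero.mp ht2 with h1 | h2
      · exact absurd h1 (inv_ne_zero hγ.ne')
      · exact pow_eq_zero_iff (by norm_num) |>.mp h2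
    have hvz : v = 0 := by
      by_contra hvne
      have := (hQ x).inv.dotProduct_mulVec_pos hvne
      have hlt : 0 < ∑ i, v i * Matrix.mulVec (Q x)⁻¹ v i := by
        simpa [dotProduct] using this
      exact absurd ht1 hlt.ne'
    have hLFpos : 0 < LieF h f x := by
      by_contra hle
      push_neg at hle
      exact hB x hx hle hvz
    have : ω x = LieF h f x := by
      rw [hω x, hx, hα0]
      have : (∑ i, LieG h g x i * Matrix.mulVec (Q x)⁻¹ (c x) i) = 0 := by
        apply Finset.sum_eq_zero
        intro i _
        have : LieG h g x i = 0 := congrFun hvz i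
        rw [this, zero_mul]
      rw [this]
      ring
    rw [this]; exact hLFpos
  -- d is nonnegative
  have hdnn : ∀ x, 0 ≤ d x := by
    intro x
    rw [hd x]
    refine add_nonneg ?_ (mul_nonneg (inv_nonneg.mpr hγ.le) (sq_nonneg _))
    have := (hQ x).inv.posSemidef.dotProduct_mulVec_nonneg (LieG h g x)
    simpa [dotProduct] using this
  -- closed form for lam valid everywhere
  have hform : lam = fun y => max 0 (-ω y) / d y := by
    funext y
    rw [hlam y]
    by_cases hy : ω y < 0
    · rw [if_pos hy, max_eq_right (by linarith)]
    · push_neg at hy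
      rw [if_neg (not_lt.mpr hy), max_eq_left (by linarith), zero_div]
  -- continuity of lam
  have hlamc : Continuous lam := by
    rw [continuous_iff_continuousAt]
    intro x
    by_cases hdx : d x = 0
    · have hωx : 0 < ω x := hkey x hdx
      have hU : ω ⁻¹' Set.Ioi 0 ∈ nhds x :=
        (isOpen_Ioi.preimage hωc).mem_nhds hωx
      have hev : lam =ᶠ[nhds x] fun _ => (0 : ℝ) := by
        filter_upwards [hU] with y hy
        rw [hlam y, if_neg (not_lt.mpr (le_of_lt hy))]
      exact ContinuousAt.congr continuousAt_const hev.symm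
    · rw [hform]
      exact ((continuous_const.max hωc.neg).continuousAt).div hdc.continuousAt hdx
  -- continuity of u
  have huc : Continuous u := by
    have : u = fun x =>
        -(Matrix.mulVec (Q x)⁻¹ (fun i => c x i - LieG h g x i * lam x)) := funext hu
    rw [this]
    refine continuous_pi fun i => ?_
    simp only [Pi.neg_apply]
    exact (hmul (fun x => fun i => c x i - LieG h g x i * lam x)
      (continuous_pi fun i => ((continuous_apply i).comp hc).sub ((hLG i).mul hlamc)) i).neg
  -- continuity of μ
  have hμc : Continuous μ := by
    have : μ = fun x => h x * lam x / γ := funext hμ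
    rw [this]
    exact (hh.continuous.mul hlamc).div_const γ
  exact ⟨hlamc, huc, hμc⟩
end

section
/- Consider the QP setting, and additionally assume that f, g, Q^{-1}, c, α, and h are locally Lipschitz on ℝ^n, that for all x ∈ B, L_g h(x) ≠ 0, and that h′ is locally Lipschitz on a set D ⊆ ℝ^n. Define λ(x) = −ω(x)/d(x) if x ∈ Ω and λ(x) = 0 otherwise, u(x) = −Q(x)^{-1}(c(x) − L_g h(x)^T λ(x)), and μ(x) = h(x) λ(x)/γ. Then λ, u, and μ are locally Lipschitz on D. -/
open Metric Set Filter Matrix Topology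

section Helpers
variable {α : Type*} [PseudoMetricSpace α] {s : Set α}

lemma llo_iff' {β : Type*} [PseudoMetricSpace β] {f : α → β} :
    LocallyLipschitzOn s f ↔ ∀ x ∈ s, ∃ K : ℝ, ∃ t ∈ 𝓝[s] x,
      ∀ y ∈ t, ∀ z ∈ t, dist (f y) (f z) ≤ K * dist y z := by
  constructor
  · intro H x hx
    obtain ⟨K, t, ht, hK⟩ := H hx
    exact ⟨K, t, ht, fun y hy z hz => hK.dist_le_mul y hy z hz⟩
  · intro H x hx
    obtain ⟨K, t, ht, hK⟩ := H x hx
    exact ⟨K.toNNReal, t, ht, LipschitzOnWith.of_dist_le' fun y hy z hz => hK y hy z hz⟩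

lemma llo_point {E : Type*} [SeminormedAddCommGroup E] {f : α → E} {x : α}
    (hx : x ∈ s)
    (H : ∃ K : ℝ, ∃ t ∈ 𝓝[s] x, ∀ y ∈ t, ∀ z ∈ t, dist (f y) (f z) ≤ K * dist y z) :
    ∃ K C : ℝ, 0 ≤ K ∧ 0 ≤ C ∧ ∃ t ∈ 𝓝[s] x,
      (∀ y ∈ t, ∀ z ∈ t, dist (f y) (f z) ≤ K * dist y z) ∧ (∀ y ∈ t, ‖f y‖ ≤ C) := by
  obtain ⟨K, t, ht, hK⟩ := H
  obtain ⟨ε, hε, hball⟩ := mem_nhdsWithin_iff.1 ht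
  refine ⟨max K 0, ‖f x‖ + max K 0 * ε, le_max_right _ _, by positivity,
    ball x ε ∩ s, inter_mem (mem_nhdsWithin_of_mem_nhds (ball_mem_nhds x hε))
      self_mem_nhdsWithin, fun y hy z hz => ?_, fun y hy => ?_⟩
  · exact (hK y (hball hy) z (hball hz)).trans
      (mul_le_mul_of_nonneg_right (le_max_left _ _) dist_nonneg)
  · have hxt : x ∈ ball x ε ∩ s := ⟨mem_ball_self hε, hx⟩
    have h1 : dist (f y) (f x) ≤ max K 0 * ε := by
      refine (hK y (hball hy) x (hball hxt)).trans ?_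
      have : dist y x ≤ ε := le_of_lt hy.1
      have hK0 : K ≤ max K 0 := le_max_left _ _
      nlinarith [dist_nonneg (x := y) (y := x), le_max_right K 0]
    have h2 : ‖f y‖ - ‖f x‖ ≤ ‖f y - f x‖ := norm_sub_norm_le _ _
    rw [← dist_eq_norm] at h2
    linarith

lemma llo_mulR {f g : α → ℝ} (hf : LocallyLipschitzOn s f) (hg : LocallyLipschitzOn s g) :
    LocallyLipschitzOn s fun x => f x * g x := by
  rw [llo_iff'] at hf hg ⊢
  intro x hx
  obtain ⟨Kf, Cf, hKf, hCf, tf, htf, hf1, hf2⟩ := llo_point hx (hf x hx)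
  obtain ⟨Kg, Cg, hKg, hCg, tg, htg, hg1, hg2⟩ := llo_point hx (hg x hx)
  refine ⟨Cf * Kg + Cg * Kf, tf ∩ tg, inter_mem htf htg, ?_⟩
  rintro y ⟨hy1, hy2⟩ z ⟨hz1, hz2⟩
  have e : f y * g y - f z * g z = f y * (g y - g z) + (f y - f z) * g z := by ring
  rw [Real.dist_eq, e]
  have h1 := hf1 y hy1 z hz1
  have h2 := hg1 y hy2 z hz2
  rw [Real.dist_eq] at h1 h2
  have hfy := hf2 y hy1
  have hgz := hg2 z hz2
  rw [Real.norm_eq_abs] at hfy hgz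
  calc |f y * (g y - g z) + (f y - f z) * g z|
      ≤ |f y * (g y - g z)| + |(f y - f z) * g z| := abs_add_le _ _
    _ = |f y| * |g y - g z| + |f y - f z| * |g z| := by rw [abs_mul, abs_mul]
    _ ≤ (Cf * Kg + Cg * Kf) * dist y z := by
        nlinarith [abs_nonneg (f y), abs_nonneg (g z), abs_nonneg (g y - g z),
          abs_nonneg (f y - f z), dist_nonneg (x := y) (y := z)]

lemma llo_clmApply {E : Type*} [NormedAddCommGroup E] [NormedSpace ℝ E]
    {F : α → E →L[ℝ] ℝ} {v : α → E} (hF : LocallyLipschitzOn s F)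
    (hv : LocallyLipschitzOn s v) : LocallyLipschitzOn s fun x => F x (v x) := by
  rw [llo_iff'] at hF hv ⊢
  intro x hx
  obtain ⟨KF, CF, hKF, hCF, tF, htF, hF1, hF2⟩ := llo_point hx (hF x hx)
  obtain ⟨Kv, Cv, hKv, hCv, tv, htv, hv1, hv2⟩ := llo_point hx (hv x hx)
  refine ⟨CF * Kv + Cv * KF, tF ∩ tv, inter_mem htF htv, ?_⟩
  rintro y ⟨hy1, hy2⟩ z ⟨hz1, hz2⟩
  have e : F y (v y) - F z (v z) = F y (v y - v z) + (F y - F z) (v z) := by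
    simp [map_sub, ContinuousLinearMap.sub_apply]
  rw [dist_eq_norm, e]
  have h1 := hF1 y hy1 z hz1
  have h2 := hv1 y hy2 z hz2
  rw [dist_eq_norm] at h1 h2
  have hFy := hF2 y hy1
  have hvz := hv2 z hz2
  calc ‖F y (v y - v z) + (F y - F z) (v z)‖
      ≤ ‖F y (v y - v z)‖ + ‖(F y - F z) (v z)‖ := norm_add_le _ _
    _ ≤ ‖F y‖ * ‖v y - v z‖ + ‖F y - F z‖ * ‖v z‖ := by
        gcongr <;> exact ContinuousLinearMap.le_opNorm _ _
    _ ≤ (CF * Kv + Cv * KF) * dist y z := by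
        nlinarith [norm_nonneg (F y), norm_nonneg (v z), norm_nonneg (v y - v z),
          norm_nonneg (F y - F z), dist_nonneg (x := y) (y := z)]

lemma llo_const (b : ℝ) : LocallyLipschitzOn s fun _ => b :=
  (LocallyLipschitz.const b).locallyLipschitzOn

lemma llo_sum {ι : Type*} (t : Finset ι) {F : ι → α → ℝ}
    (h : ∀ i ∈ t, LocallyLipschitzOn s (F i)) :
    LocallyLipschitzOn s (fun x => ∑ i ∈ t, F i x) := by
  classical
  induction t using Finset.induction with
  | empty => simpa using llo_const (s := s) 0
  | @insert a t ha ih =>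
      have : (fun x => ∑ i ∈ insert a t, F i x)
          = fun x => F a x + ∑ i ∈ t, F i x := by
        funext x; rw [Finset.sum_insert ha]
      rw [this]
      exact (h a (Finset.mem_insert_self _ _)).add
        (ih fun i hi => h i (Finset.mem_insert_of_mem hi))

lemma llo_pi {m : ℕ} {F : α → Fin m → ℝ}
    (h : ∀ i, LocallyLipschitzOn s fun x => F x i) : LocallyLipschitzOn s F := by
  rw [llo_iff']
  intro x hx
  choose K t ht hK using fun i => llo_iff'.1 (h i) x hx
  refine ⟨∑ i, |K i|, ⋂ i, t i, Filter.iInter_mem.2 ht, fun y hy z hz => ?_⟩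
  rw [dist_pi_le_iff (by positivity)]
  intro i
  refine (hK i y (mem_iInter.1 hy i) z (mem_iInter.1 hz i)).trans ?_
  refine mul_le_mul_of_nonneg_right ?_ dist_nonneg
  exact (le_abs_self _).trans (Finset.single_le_sum (f := fun i => |K i|)
    (fun j _ => abs_nonneg _) (Finset.mem_univ i))

lemma lip_col {n m : ℕ} (i : Fin m) :
    LipschitzWith 1 (fun (v : Fin n → Fin m → ℝ) => fun k => v k i) := by
  refine LipschitzWith.mk_one fun v w => ?_
  rw [dist_pi_le_iff dist_nonneg]
  exact fun k => (dist_le_pi_dist (v k) (w k) i).trans (dist_le_pi_dist v w k)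

end Helpers

/-- Theorem 1(d): if `f`, `g`, `Q⁻¹`, `c`, `α`, and `h` are locally Lipschitz and
`h′` is locally Lipschitz on `D`, then `λ`, `u`, and `μ` are locally Lipschitz
on `D`. -/
theorem closed_form_locallyLipschitzOn {n m : ℕ}
    (h : (Fin n → ℝ) → ℝ) (hh : ContDiff ℝ 1 h) (hhl : LocallyLipschitz h)
    (f : (Fin n → ℝ) → Fin n → ℝ) (hf : Continuous f) (hfl : LocallyLipschitz f)
    (g : (Fin n → ℝ) → Fin n → Fin m → ℝ) (hg : Continuous g) (hgl : LocallyLipschitz g)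
    (Q : (Fin n → ℝ) → Matrix (Fin m) (Fin m) ℝ) (hQ : ∀ x, (Q x).PosDef)
    (hQc : ∀ i j, Continuous fun x => Q x i j)
    (hQinvl : ∀ i j, LocallyLipschitz fun x => (Q x)⁻¹ i j)
    (c : (Fin n → ℝ) → Fin m → ℝ) (hc : Continuous c) (hcl : LocallyLipschitz c)
    (γ : ℝ) (hγ : 0 < γ)
    (α : ℝ → ℝ) (hα0 : α 0 = 0) (hαmono : Monotone α) (hαl : LocallyLipschitz α)
    (hB : ∀ x, h x = 0 → LieF h f x ≤ 0 → LieG h g x ≠ 0)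
    (D : Set (Fin n → ℝ)) (hD : LocallyLipschitzOn D (fderiv ℝ h))
    (ω : (Fin n → ℝ) → ℝ)
    (hω : ∀ x, ω x = LieF h f x
      - (∑ i, LieG h g x i * Matrix.mulVec (Q x)⁻¹ (c x) i) + α (h x))
    (d : (Fin n → ℝ) → ℝ)
    (hd : ∀ x, d x = (∑ i, LieG h g x i * Matrix.mulVec (Q x)⁻¹ (LieG h g x) i)
      + γ⁻¹ * (h x) ^ 2)
    (lam : (Fin n → ℝ) → ℝ)
    (hlam : ∀ x, lam x = if ω x < 0 then -ω x / d x else 0)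
    (u : (Fin n → ℝ) → Fin m → ℝ)
    (hu : ∀ x, u x = -(Matrix.mulVec (Q x)⁻¹ (fun i => c x i - LieG h g x i * lam x)))
    (μ : (Fin n → ℝ) → ℝ) (hμ : ∀ x, μ x = h x * lam x / γ) :
    LocallyLipschitzOn D lam ∧ LocallyLipschitzOn D u ∧ LocallyLipschitzOn D μ := by
  classical
  have hLieF : LocallyLipschitzOn D (LieF h f) :=
    llo_clmApply hD hfl.locallyLipschitzOn
  have hLieG : ∀ i, LocallyLipschitzOn D fun x => LieG h g x i := fun i =>
    llo_clmApply hD ((lip_col i).locallyLipschitz.comp hgl).locallyLipschitzOn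
  have hcj : ∀ j, LocallyLipschitzOn D fun x => c x j := fun j =>
    ((LipschitzWith.eval j).locallyLipschitz.comp hcl).locallyLipschitzOn
  have hQij : ∀ i j, LocallyLipschitzOn D fun x => (Q x)⁻¹ i j := fun i j =>
    (hQinvl i j).locallyLipschitzOn
  have hhD : LocallyLipschitzOn D h := hhl.locallyLipschitzOn
  have hαh : LocallyLipschitzOn D fun x => α (h x) := (hαl.comp hhl).locallyLipschitzOn
  have hMc : ∀ i, LocallyLipschitzOn D fun x => Matrix.mulVec (Q x)⁻¹ (c x) i := by
    intro i
    have e : (fun x => Matrix.mulVec (Q x)⁻¹ (c x) i)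
        = fun x => ∑ j, (Q x)⁻¹ i j * c x j := by
      funext x; simp [Matrix.mulVec, dotProduct]
    rw [e]; exact llo_sum _ fun j _ => llo_mulR (hQij i j) (hcj j)
  have hMG : ∀ i, LocallyLipschitzOn D fun x => Matrix.mulVec (Q x)⁻¹ (LieG h g x) i := by
    intro i
    have e : (fun x => Matrix.mulVec (Q x)⁻¹ (LieG h g x) i)
        = fun x => ∑ j, (Q x)⁻¹ i j * LieG h g x j := by
      funext x; simp [Matrix.mulVec, dotProduct]
    rw [e]; exact llo_sum _ fun j _ => llo_mulR (hQij i j) (hLieG j)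
  have hωD : LocallyLipschitzOn D ω := by
    rw [show ω = _ from funext hω]
    exact (hLieF.sub (llo_sum _ fun i _ => llo_mulR (hLieG i) (hMc i))).add hαh
  have hdDl : LocallyLipschitzOn D d := by
    rw [show d = _ from funext hd]
    have e : (fun x => (∑ i, LieG h g x i * Matrix.mulVec (Q x)⁻¹ (LieG h g x) i)
          + γ⁻¹ * (h x) ^ 2)
        = fun x => (∑ i, LieG h g x i * Matrix.mulVec (Q x)⁻¹ (LieG h g x) i)
          + γ⁻¹ * (h x * h x) := by
      funext x; ring
    rw [e]
    exact (llo_sum _ fun i _ => llo_mulR (hLieG i) (hMG i)).add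
      (llo_mulR (llo_const _) (llo_mulR hhD hhD))
  -- positivity of d where ω ≤ 0
  have hdpos : ∀ x, ω x ≤ 0 → 0 < d x := by
    intro x hωx
    by_contra hdx
    push_neg at hdx
    have hSnn : 0 ≤ ∑ i, LieG h g x i * Matrix.mulVec (Q x)⁻¹ (LieG h g x) i := by
      by_cases hG : LieG h g x = 0
      · simp [hG]
      · have h1 := (hQ x).inv.dotProduct_mulVec_pos hG
        have h2 : 0 < ∑ i, LieG h g x i * Matrix.mulVec (Q x)⁻¹ (LieG h g x) i := by
          simpa [dotProduct] using h1
        linarith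
    have ht2 : 0 ≤ γ⁻¹ * h x ^ 2 := by positivity
    rw [hd x] at hdx
    have hh0 : h x = 0 := by
      have h3 : γ⁻¹ * h x ^ 2 = 0 := le_antisymm (by linarith) ht2
      have hγi : γ⁻¹ ≠ 0 := by positivity
      have := (mul_eq_zero.1 h3).resolve_left hγi
      exact pow_eq_zero_iff two_ne_zero |>.1 this
    have hG0 : LieG h g x = 0 := by
      by_contra hG
      have h1 := (hQ x).inv.dotProduct_mulVec_pos hG
      have h2 : 0 < ∑ i, LieG h g x i * Matrix.mulVec (Q x)⁻¹ (LieG h g x) i := by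
        simpa [dotProduct] using h1
      nlinarith [sq_nonneg (h x)]
    have hLf : LieF h f x ≤ 0 := by
      have hωe := hω x
      rw [hG0, hh0, hα0] at hωe
      simp at hωe
      linarith [hωx, hωe.le, hωe.ge]
    exact hB x hh0 hLf hG0
  -- N = max (-ω) 0
  have hND : LocallyLipschitzOn D (fun x => max (-ω x) 0) := by
    rw [llo_iff']
    intro x hx
    obtain ⟨K, t, ht, hK⟩ := llo_iff'.1 hωD x hx
    refine ⟨K, t, ht, fun y hy z hz => ?_⟩
    have h1 := hK y hy z hz
    rw [Real.dist_eq] at h1 ⊢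
    calc |max (-ω y) 0 - max (-ω z) 0| ≤ |(-ω y) - (-ω z)| := abs_max_sub_max_le_abs _ _ _
      _ = |ω y - ω z| := by rw [neg_sub_neg, abs_sub_comm]
      _ ≤ K * dist y z := h1
  -- lambda
  have hlamD : LocallyLipschitzOn D lam := by
    rw [llo_iff']
    intro x₀ hx₀
    by_cases hcase : ω x₀ ≤ 0
    · have hd0 : 0 < d x₀ := hdpos x₀ hcase
      set δ := d x₀ / 2 with hδdef
      have hδ : 0 < δ := by positivity
      have ht1 : d ⁻¹' (Set.Ioi δ) ∈ nhdsWithin x₀ D :=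
        (hdDl.continuousOn x₀ hx₀).preimage_mem_nhdsWithin (Ioi_mem_nhds (by linarith))
      obtain ⟨KN, CN, hKN, hCN, tN, htN, hN1, hN2⟩ := llo_point hx₀ (llo_iff'.1 hND x₀ hx₀)
      obtain ⟨Kd, Cd, hKd, hCd, td, htd, hd1, hd2⟩ := llo_point hx₀ (llo_iff'.1 hdDl x₀ hx₀)
      refine ⟨(KN * Cd + CN * Kd) / (δ * δ), d ⁻¹' (Set.Ioi δ) ∩ tN ∩ td,
        inter_mem (inter_mem ht1 htN) htd, ?_⟩
      have hlameq : ∀ y, 0 < d y → lam y = max (-ω y) 0 / d y := by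
        intro y hdy
        rw [hlam y]
        by_cases hωy : ω y < 0
        · rw [if_pos hωy, max_eq_left (by linarith)]
        · push_neg at hωy
          rw [if_neg (not_lt.2 hωy), max_eq_right (by linarith), zero_div]
      rintro y ⟨⟨hy1, hy2⟩, hy3⟩ z ⟨⟨hz1, hz2⟩, hz3⟩
      have hdy : δ < d y := hy1
      have hdz : δ < d z := hz1
      rw [Real.dist_eq, hlameq y (hδ.trans hdy), hlameq z (hδ.trans hdz)]
      set Ny := max (-ω y) 0 with hNy
      set Nz := max (-ω z) 0 with hNz
      have e : Ny / d y - Nz / d z = ((Ny - Nz) * d z + Nz * (d z - d y)) / (d y * d z) := by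
        rw [div_sub_div _ _ (ne_of_gt (hδ.trans hdy)) (ne_of_gt (hδ.trans hdz))]
        congr 1
        ring
      rw [e, abs_div, abs_of_pos (mul_pos (hδ.trans hdy) (hδ.trans hdz))]
      have b1 : |Ny - Nz| ≤ KN * dist y z := by
        have := hN1 y hy2 z hz2; rwa [Real.dist_eq] at this
      have b2 : |d z - d y| ≤ Kd * dist y z := by
        have := hd1 z hz3 y hy3
        rw [Real.dist_eq] at this
        have hsym : dist z y = dist y z := dist_comm z y
        rwa [hsym] at this
      have b3 : |d z| ≤ Cd := by have := hd2 z hz3; rwa [Real.norm_eq_abs] at this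
      have b4 : |Nz| ≤ CN := by have := hN2 z hz2; rwa [Real.norm_eq_abs] at this
      have hnum : |(Ny - Nz) * d z + Nz * (d z - d y)|
          ≤ KN * dist y z * Cd + CN * (Kd * dist y z) := by
        calc |(Ny - Nz) * d z + Nz * (d z - d y)|
            ≤ |Ny - Nz| * |d z| + |Nz| * |d z - d y| := by
              refine (abs_add_le _ _).trans ?_
              rw [abs_mul, abs_mul]
          _ ≤ KN * dist y z * Cd + CN * (Kd * dist y z) := by
              nlinarith [abs_nonneg (Ny - Nz), abs_nonneg Nz, abs_nonneg (d z),
                abs_nonneg (d z - d y), dist_nonneg (x := y) (y := z)]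
      calc |(Ny - Nz) * d z + Nz * (d z - d y)| / (d y * d z)
          ≤ (KN * dist y z * Cd + CN * (Kd * dist y z)) / (δ * δ) := by
            refine div_le_div₀ (by positivity) hnum (by positivity) ?_
            exact mul_le_mul hdy.le hdz.le hδ.le (hδ.trans hdy).le
        _ = (KN * Cd + CN * Kd) / (δ * δ) * dist y z := by ring
    · push_neg at hcase
      have ht : ω ⁻¹' (Set.Ioi 0) ∈ nhdsWithin x₀ D :=
        (hωD.continuousOn x₀ hx₀).preimage_mem_nhdsWithin (Ioi_mem_nhds hcase)
      refine ⟨0, _, ht, fun y hy z hz => ?_⟩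
      have hy' : lam y = 0 := by
        rw [hlam y, if_neg (not_lt.2 (le_of_lt (Set.mem_Ioi.1 hy)))]
      have hz' : lam z = 0 := by
        rw [hlam z, if_neg (not_lt.2 (le_of_lt (Set.mem_Ioi.1 hz)))]
      rw [hy', hz']
      simp
  -- u
  have huD : LocallyLipschitzOn D u := by
    rw [show u = _ from funext hu]
    apply llo_pi
    intro i
    have e : (fun x => (-(Matrix.mulVec (Q x)⁻¹ fun j => c x j - LieG h g x j * lam x)) i)
        = fun x => (-1 : ℝ) * ∑ j, (Q x)⁻¹ i j * (c x j - LieG h g x j * lam x) := by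
      funext x
      simp [Matrix.mulVec, dotProduct]
    rw [e]
    exact llo_mulR (llo_const _) (llo_sum _ fun j _ =>
      llo_mulR (hQij i j) ((hcj j).sub (llo_mulR (hLieG j) hlamD)))
  -- mu
  have hμD : LocallyLipschitzOn D μ := by
    rw [show μ = _ from funext hμ]
    have e : (fun x => h x * lam x / γ) = fun x => h x * lam x * γ⁻¹ := by
      funext x; rw [div_eq_mul_inv]
    rw [e]
    exact llo_mulR (llo_mulR hhD hlamD) (llo_const _)
  exact ⟨hlamD, huD, hμD⟩
end

section
/- Consider the QP setting, and assume that for all x ∈ B, L_g h(x) ≠ 0. Define λ(x) = −ω(x)/d(x) if x ∈ Ω and λ(x) = 0 otherwise, and u(x) = −Q(x)^{-1}(c(x) − L_g h(x)^T λ(x)). Then for every x ∈ ℝ^n with h(x) = 0, L_f h(x) + L_g h(x) u(x) ≥ 0; more precisely, L_f h(x) + L_g h(x) u(x) = 0 if x ∈ Ω and L_f h(x) + L_g h(x) u(x) = ω(x) ≥ 0 if x ∉ Ω. -/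
/-- On the zero level set of `h`, the closed-form control satisfies
`L_f h(x) + L_g h(x) u(x) ≥ 0`; more precisely it equals `0` on `Ω`
and equals `ω(x) ≥ 0` off `Ω`. -/
theorem closed_form_boundary_inequality {n m : ℕ}
    (h : (Fin n → ℝ) → ℝ) (hh : ContDiff ℝ 1 h)
    (f : (Fin n → ℝ) → Fin n → ℝ) (hf : Continuous f)
    (g : (Fin n → ℝ) → Fin n → Fin m → ℝ) (hg : Continuous g)
    (Q : (Fin n → ℝ) → Matrix (Fin m) (Fin m) ℝ) (hQ : ∀ x, (Q x).PosDef)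
    (hQc : ∀ i j, Continuous fun x => Q x i j)
    (c : (Fin n → ℝ) → Fin m → ℝ) (hc : Continuous c)
    (γ : ℝ) (hγ : 0 < γ)
    (α : ℝ → ℝ) (hα0 : α 0 = 0) (hαmono : Monotone α)
    (hB : ∀ x, h x = 0 → LieF h f x ≤ 0 → LieG h g x ≠ 0)
    (ω : (Fin n → ℝ) → ℝ)
    (hω : ∀ x, ω x = LieF h f x
      - (∑ i, LieG h g x i * Matrix.mulVec (Q x)⁻¹ (c x) i) + α (h x))
    (d : (Fin n → ℝ) → ℝ)
    (hd : ∀ x, d x = (∑ i, LieG h g x i * Matrix.mulVec (Q x)⁻¹ (LieG h g x) i)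
      + γ⁻¹ * (h x) ^ 2)
    (lam : (Fin n → ℝ) → ℝ)
    (hlam : ∀ x, lam x = if ω x < 0 then -ω x / d x else 0)
    (u : (Fin n → ℝ) → Fin m → ℝ)
    (hu : ∀ x, u x = -(Matrix.mulVec (Q x)⁻¹ (fun i => c x i - LieG h g x i * lam x))) :
    ∀ x : Fin n → ℝ, h x = 0 →
      (0 ≤ LieF h f x + ∑ i, LieG h g x i * u x i) ∧
      (ω x < 0 → LieF h f x + ∑ i, LieG h g x i * u x i = 0) ∧
      (¬ ω x < 0 →
        LieF h f x + ∑ i, LieG h g x i * u x i = ω x ∧ 0 ≤ ω x) := by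

  intro x hx0
  have hα : α (h x) = 0 := by rw [hx0, hα0]
  set v := LieG h g x with hv
  set M := (Q x)⁻¹ with hM
  have hQinv : M.PosDef := (hQ x).inv
  have key : ∑ i, v i * u x i
      = -(∑ i, v i * Matrix.mulVec M (c x) i)
        + lam x * (∑ i, v i * Matrix.mulVec M v i) := by
    have hlin : ∀ i, Matrix.mulVec M (fun j => c x j - v j * lam x) i
        = Matrix.mulVec M (c x) i - lam x * Matrix.mulVec M v i := by
      intro i
      simp only [Matrix.mulVec, dotProduct, mul_sub, Finset.sum_sub_distrib,
        Finset.mul_sum]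
      congr 1
      apply Finset.sum_congr rfl
      intro j _
      ring
    rw [hu]
    simp only [Pi.neg_apply, ← hM, ← hv, hlin]
    rw [Finset.mul_sum, ← Finset.sum_neg_distrib, ← Finset.sum_add_distrib]
    apply Finset.sum_congr rfl
    intro i _
    ring
  have hdx : d x = ∑ i, v i * Matrix.mulVec M v i := by
    rw [hd, hx0]; ring
  have hωx : ω x = LieF h f x - ∑ i, v i * Matrix.mulVec M (c x) i := by
    rw [hω, hα]; ring
  by_cases hΩ : ω x < 0
  · have hvne : v ≠ 0 := by
      intro hv0
      have hsum : ω x = LieF h f x := by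
        rw [hωx, hv0]; simp
      exact hB x hx0 (by linarith [hΩ, hsum.symm]) hv0
    have hdpos : 0 < d x := by
      rw [hdx]
      have := hQinv.dotProduct_mulVec_pos hvne
      simpa [dotProduct, Matrix.mulVec] using this
    have hlamx : lam x = -ω x / d x := by rw [hlam]; simp [hΩ]
    have heq0 : LieF h f x + ∑ i, v i * u x i = 0 := by
      rw [key, hlamx, ← hdx, div_mul_cancel₀ _ (ne_of_gt hdpos)]
      linarith [hωx]
    exact ⟨le_of_eq heq0.symm, fun _ => heq0, fun hcon => absurd hΩ hcon⟩
  · have hlam0 : lam x = 0 := by rw [hlam]; simp [hΩ]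
    have heq : LieF h f x + ∑ i, v i * u x i = ω x := by
      rw [key, hlam0, hωx]; ring
    exact ⟨by rw [heq]; exact not_lt.mp hΩ, fun hc => absurd hc hΩ, fun _ => ⟨heq, not_lt.mp hΩ⟩⟩
end
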